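/- Let (X,d) be a complete geodesic metric space and μ a Borel measure on X that is positive and finite on all balls and satisfies the uniform local doubling condition μ(B_{2r}(x)) ≤ 2^N·μ(B_r(x)) for all x ∈ X and all 0 < r < σ, for some constants N > 0 and σ > 0. Then the doubling scale can be enlarged arbitrarily: for every τ > 1 there exists N' > 0, depending only on N and τ, such that μ(B_{2r}(x)) ≤ 2^{N'}·μ(B_r(x)) for all x ∈ X and all 0 < r < τ·σ. -/

import Mathlib

open Metric MeasureTheory

/-- `γ` is a geodesic segment from `x` to `y`, parametrized by arclength on `[0, dist x y]`. -/
def IsGeodesicSegment {X : Type*} [MetricSpace X] (γ : ℝ → X) (x y : X) : Prop :=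
  γ 0 = x ∧ γ (dist x y) = y ∧
    ∀ s ∈ Set.Icc (0 : ℝ) (dist x y), ∀ t ∈ Set.Icc (0 : ℝ) (dist x y),
      dist (γ s) (γ t) = |s - t|

/-- A metric space is geodesic if any two points are joined by a geodesic segment. -/
def GeodesicSpace (X : Type*) [MetricSpace X] : Prop :=
  ∀ x y : X, ∃ γ : ℝ → X, IsGeodesicSegment γ x y

universe u

theorem annulus_step {X : Type u} [MetricSpace X] [MeasurableSpace X] [BorelSpace X]
    (hgeo : GeodesicSpace X) (μ : Measure X) (σ N : ℝ) (hσ : 0 < σ) (hN : 0 < N)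
    (hpos : ∀ (x : X) (r : ℝ), 0 < r → 0 < μ (ball x r) ∧ μ (ball x r) < ⊤)
    (hdb : ∀ (x : X) (r : ℝ), 0 < r → r < σ →
      μ (ball x (2 * r)) ≤ (2 : ENNReal) ^ N * μ (ball x r))
    (x : X) (ρ : ℝ) (hρ : σ / 16 ≤ ρ) :
    μ (ball x (ρ + σ / 16)) ≤ (2 : ENNReal) ^ (5 * N + 1) * μ (ball x ρ) := by
  set δ : ℝ := σ / 16 with hδdef
  have hδ : 0 < δ := by positivity
  have hρpos : 0 < ρ := lt_of_lt_of_le hδ hρ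
  -- five doublings
  have hquint : ∀ p : X, μ (ball p (16 * δ)) ≤ (2 : ENNReal) ^ (5 * N) * μ (ball p (δ / 2)) := by
    intro p
    have hσ16 : σ = 16 * δ := by rw [hδdef]; ring
    have h1 := hdb p (8 * δ) (by positivity) (by rw [hσ16]; linarith)
    have h2 := hdb p (4 * δ) (by positivity) (by rw [hσ16]; linarith)
    have h3 := hdb p (2 * δ) (by positivity) (by rw [hσ16]; linarith)
    have h4 := hdb p δ hδ (by rw [hσ16]; linarith)
    have h5 := hdb p (δ / 2) (by positivity) (by rw [hσ16]; linarith)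
    rw [show (2:ℝ) * (8 * δ) = 16 * δ by ring] at h1
    rw [show (2:ℝ) * (4 * δ) = 8 * δ by ring] at h2
    rw [show (2:ℝ) * (2 * δ) = 4 * δ by ring] at h3
    rw [show (2:ℝ) * δ = 2 * δ by ring] at h4
    rw [show (2:ℝ) * (δ / 2) = δ by ring] at h5
    have hmul : ∀ (a b : ℝ) (m : ENNReal),
        (2 : ENNReal) ^ a * ((2 : ENNReal) ^ b * m) = (2 : ENNReal) ^ (a + b) * m := by
      intro a b m
      rw [← mul_assoc, ← ENNReal.rpow_add a b two_ne_zero ENNReal.ofNat_ne_top]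
    calc μ (ball p (16 * δ)) ≤ (2:ENNReal)^N * μ (ball p (8 * δ)) := h1
      _ ≤ (2:ENNReal)^N * ((2:ENNReal)^N * μ (ball p (4 * δ))) := mul_le_mul_right h2 _
      _ ≤ (2:ENNReal)^N * ((2:ENNReal)^N * ((2:ENNReal)^N * μ (ball p (2 * δ)))) := by
          exact mul_le_mul_right (mul_le_mul_right h3 _) _
      _ ≤ (2:ENNReal)^N * ((2:ENNReal)^N * ((2:ENNReal)^N *
            ((2:ENNReal)^N * μ (ball p δ)))) := by
          exact mul_le_mul_right (mul_le_mul_right (mul_le_mul_right h4 _) _) _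
      _ ≤ (2:ENNReal)^N * ((2:ENNReal)^N * ((2:ENNReal)^N *
            ((2:ENNReal)^N * ((2:ENNReal)^N * μ (ball p (δ / 2)))))) := by
          exact mul_le_mul_right (mul_le_mul_right (mul_le_mul_right
            (mul_le_mul_right h5 _) _) _) _
      _ = (2:ENNReal)^(5 * N) * μ (ball p (δ / 2)) := by
          rw [hmul, hmul, hmul, hmul]
          rw [show N + N + N + N + N = 5 * N by ring]
  -- the annulus
  set A : Set X := ball x (ρ + δ) \ ball x ρ with hAdef
  choose γ hγ using hgeo x
  set z : X → X := fun y => γ y (ρ - δ) with hzdef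
  have hz : ∀ y ∈ A, dist x (z y) = ρ - δ ∧ dist (z y) y < 2 * δ := by
    intro y hy
    obtain ⟨hy1, hy2⟩ := hy
    rw [mem_ball, dist_comm] at hy1
    rw [mem_ball, dist_comm] at hy2
    push_neg at hy2
    have hmem : ρ - δ ∈ Set.Icc (0:ℝ) (dist x y) := ⟨by linarith, by linarith⟩
    have h0mem : (0:ℝ) ∈ Set.Icc (0:ℝ) (dist x y) := ⟨le_refl 0, dist_nonneg⟩
    have hdmem : dist x y ∈ Set.Icc (0:ℝ) (dist x y) := ⟨dist_nonneg, le_refl _⟩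
    obtain ⟨hg0, hgd, hgiso⟩ := hγ y
    constructor
    · have := hgiso 0 h0mem (ρ - δ) hmem
      rw [hg0] at this
      rw [this, zero_sub, abs_neg, abs_of_nonneg (by linarith)]
    · have := hgiso (ρ - δ) hmem (dist x y) hdmem
      rw [hgd] at this
      rw [this, abs_of_nonpos (by linarith), neg_sub]
      linarith
  -- Vitali
  obtain ⟨U, hUA, hUdisj, hUcov⟩ :=
    Vitali.exists_disjoint_subfamily_covering_enlargement_closedBall A z (fun _ => 2 * δ)
      (2 * δ) (fun _ _ => le_rfl) 4 (by norm_num)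
  -- small balls inside ball x ρ, pairwise disjoint
  have hsmall : ∀ b ∈ U, ball (z b) (δ / 2) ⊆ ball x ρ := by
    intro b hb w hw
    rw [mem_ball] at hw ⊢
    have hzb := (hz b (hUA hb)).1
    calc dist w x ≤ dist w (z b) + dist (z b) x := dist_triangle _ _ _
      _ < δ / 2 + (ρ - δ) := by rw [dist_comm (z b) x, hzb]; linarith
      _ ≤ ρ := by linarith
  have hsmalldisj : Pairwise (Function.onFun Disjoint
      (fun b : U => ball (z b.1) (δ / 2))) := by
    intro i j hij
    have := hUdisj i.2 j.2 (fun h => hij (Subtype.ext h))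
    exact this.mono
      ((ball_subset_closedBall).trans (closedBall_subset_closedBall (by linarith)))
      ((ball_subset_closedBall).trans (closedBall_subset_closedBall (by linarith)))
  -- countability of U
  have hUcount : U.Countable := by
    have hdisjCB : Pairwise (Function.onFun Disjoint
        (fun b : U => closedBall (z b.1) (2 * δ))) :=
      fun i j hij => hUdisj i.2 j.2 (fun h => hij (Subtype.ext h))
    have hsub : (⋃ b : U, closedBall (z b.1) (2 * δ)) ⊆ ball x (ρ + 2 * δ) := by
      rintro w hw
      simp only [Set.mem_iUnion] at hw
      obtain ⟨b, hb⟩ := hw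
      rw [mem_closedBall] at hb
      rw [mem_ball]
      have hzb := (hz b.1 (hUA b.2)).1
      calc dist w x ≤ dist w (z b.1) + dist (z b.1) x := dist_triangle _ _ _
        _ ≤ 2 * δ + (ρ - δ) := by rw [dist_comm (z b.1) x, hzb]; exact add_le_add_left hb _
        _ < ρ + 2 * δ := by linarith
    have hfin : μ (⋃ b : U, closedBall (z b.1) (2 * δ)) ≠ ⊤ :=
      ne_top_of_le_ne_top (hpos x (ρ + 2 * δ) (by linarith)).2.ne (measure_mono hsub)
    have hcnt := MeasureTheory.Measure.countable_meas_pos_of_disjoint_of_meas_iUnion_ne_top μ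
      (fun b : U => measurableSet_closedBall) hdisjCB hfin
    have : {b : U | 0 < μ (closedBall (z b.1) (2 * δ))} = Set.univ := by
      ext b
      simp only [Set.mem_setOf_eq, Set.mem_univ, iff_true]
      exact lt_of_lt_of_le (hpos (z b.1) (δ / 2) (by positivity)).1
        (measure_mono ((ball_subset_closedBall).trans
          (closedBall_subset_closedBall (by linarith))))
    rw [this, Set.countable_univ_iff] at hcnt
    exact Set.countable_coe_iff.mp hcnt
  -- covering of the annulus
  have hAcov : A ⊆ ⋃ b ∈ U, ball (z b) (16 * δ) := by
    intro y hy
    obtain ⟨b, hb, hsub⟩ := hUcov y hy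
    have hyz : y ∈ closedBall (z y) (2 * δ) := by
      rw [mem_closedBall, dist_comm]
      exact le_of_lt (hz y hy).2
    have : y ∈ closedBall (z b) (4 * (2 * δ)) := hsub hyz
    refine Set.mem_biUnion hb ?_
    exact (closedBall_subset_ball (by linarith)) this
  -- measure estimate of the annulus
  have hA : μ A ≤ (2 : ENNReal) ^ (5 * N) * μ (ball x ρ) := by
    calc μ A ≤ μ (⋃ b ∈ U, ball (z b) (16 * δ)) := measure_mono hAcov
      _ ≤ ∑' b : U, μ (ball (z b.1) (16 * δ)) := measure_biUnion_le μ hUcount _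
      _ ≤ ∑' b : U, (2 : ENNReal) ^ (5 * N) * μ (ball (z b.1) (δ / 2)) :=
          ENNReal.tsum_le_tsum (fun b => hquint (z b.1))
      _ = (2 : ENNReal) ^ (5 * N) * ∑' b : U, μ (ball (z b.1) (δ / 2)) :=
          ENNReal.tsum_mul_left
      _ ≤ (2 : ENNReal) ^ (5 * N) * μ (⋃ b : U, ball (z b.1) (δ / 2)) :=
          mul_le_mul_right (MeasureTheory.tsum_meas_le_meas_iUnion_of_disjoint μ
            (fun b => measurableSet_ball) hsmalldisj) _
      _ ≤ (2 : ENNReal) ^ (5 * N) * μ (ball x ρ) := by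
          refine mul_le_mul_right (measure_mono ?_) _
          exact Set.iUnion_subset (fun b => hsmall b.1 b.2)
  -- conclude
  have hsplit : ball x (ρ + δ) ⊆ ball x ρ ∪ A := by
    intro w hw
    by_cases h : w ∈ ball x ρ
    · exact Or.inl h
    · exact Or.inr ⟨hw, h⟩
  have hone : (1 : ENNReal) ≤ (2 : ENNReal) ^ (5 * N) := by
    calc (1 : ENNReal) = (2 : ENNReal) ^ (0 : ℝ) := ENNReal.rpow_zero.symm
      _ ≤ (2 : ENNReal) ^ (5 * N) :=
        ENNReal.rpow_le_rpow_of_exponent_le one_le_two (by linarith)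
  calc μ (ball x (ρ + δ)) ≤ μ (ball x ρ ∪ A) := measure_mono hsplit
    _ ≤ μ (ball x ρ) + μ A := measure_union_le _ _
    _ ≤ μ (ball x ρ) + (2 : ENNReal) ^ (5 * N) * μ (ball x ρ) := add_le_add_right hA _
    _ = (1 + (2 : ENNReal) ^ (5 * N)) * μ (ball x ρ) := by rw [add_mul, one_mul]
    _ ≤ ((2 : ENNReal) ^ (5 * N) + (2 : ENNReal) ^ (5 * N)) * μ (ball x ρ) :=
        mul_le_mul_left (add_le_add_left hone _) _
    _ = (2 : ENNReal) ^ (5 * N + 1) * μ (ball x ρ) := by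
        rw [← two_mul, ENNReal.rpow_add _ _ two_ne_zero ENNReal.ofNat_ne_top,
          ENNReal.rpow_one, mul_comm ((2:ENNReal)^(5*N)) 2]

/-- **Enlarging the doubling scale.** Let `X` be a complete geodesic metric space and `μ` a
Borel measure, positive and finite on all balls, satisfying the uniform local doubling
condition `μ(B_{2r}(x)) ≤ 2^N · μ(B_r(x))` for `0 < r < σ`. Then for every `τ > 1` there
is `N' > 0`, depending only on `N` and `τ`, such that
`μ(B_{2r}(x)) ≤ 2^{N'} · μ(B_r(x))` for all `x` and all `0 < r < τ·σ`. -/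
theorem doubling_scale_enlargement (N τ : ℝ) (hN : 0 < N) (hτ : 1 < τ) :
    ∃ N' : ℝ, 0 < N' ∧
      ∀ (X : Type u) [instM : MetricSpace X] [instMeas : MeasurableSpace X]
        [instB : BorelSpace X],
        CompleteSpace X → GeodesicSpace X →
        ∀ (μ : Measure X) (σ : ℝ), 0 < σ →
          (∀ (x : X) (r : ℝ), 0 < r → 0 < μ (ball x r) ∧ μ (ball x r) < ⊤) →
          (∀ (x : X) (r : ℝ), 0 < r → r < σ →
            μ (ball x (2 * r)) ≤ (2 : ENNReal) ^ N * μ (ball x r)) →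
          ∀ (x : X) (r : ℝ), 0 < r → r < τ * σ →
            μ (ball x (2 * r)) ≤ (2 : ENNReal) ^ N' * μ (ball x r) := by
  set k : ℕ := ⌈16 * τ⌉₊ with hkdef
  have hk : 16 * τ ≤ (k : ℝ) := Nat.le_ceil _
  have hknn : (0:ℝ) ≤ (k : ℝ) := Nat.cast_nonneg _
  refine ⟨N + (5 * N + 1) * k, by positivity, ?_⟩
  intro X instM instMeas instB _hcomp hgeo μ σ hσ hpos hdb x r hr hrτ
  have hδ : (0:ℝ) < σ / 16 := by positivity
  have hNle : N ≤ N + (5 * N + 1) * k := le_add_of_nonneg_right (by positivity)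
  rcases lt_or_ge r σ with hcase | hcase
  · calc μ (ball x (2 * r)) ≤ (2 : ENNReal) ^ N * μ (ball x r) := hdb x r hr hcase
      _ ≤ (2 : ENNReal) ^ (N + (5 * N + 1) * k) * μ (ball x r) :=
        mul_le_mul_left (ENNReal.rpow_le_rpow_of_exponent_le one_le_two hNle) _
  · have hδr : σ / 16 ≤ r := le_trans (by linarith) hcase
    have key : ∀ j : ℕ, μ (ball x (r + j * (σ / 16))) ≤
        ((2 : ENNReal) ^ (5 * N + 1)) ^ j * μ (ball x r) := by
      intro j
      induction j with
      | zero => simp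
      | succ j ih =>
        have hρ : σ / 16 ≤ r + j * (σ / 16) := by
          have : (0:ℝ) ≤ j * (σ / 16) := by positivity
          linarith
        have hstep := annulus_step hgeo μ σ N hσ hN hpos hdb x (r + j * (σ / 16)) hρ
        calc μ (ball x (r + (j + 1 : ℕ) * (σ / 16)))
            = μ (ball x (r + j * (σ / 16) + σ / 16)) := by
              congr 1
              push_cast
              ring
          _ ≤ (2 : ENNReal) ^ (5 * N + 1) * μ (ball x (r + j * (σ / 16))) := hstep
          _ ≤ (2 : ENNReal) ^ (5 * N + 1) *
              (((2 : ENNReal) ^ (5 * N + 1)) ^ j * μ (ball x r)) := mul_le_mul_right ih _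
          _ = ((2 : ENNReal) ^ (5 * N + 1)) ^ (j + 1) * μ (ball x r) := by
              rw [← mul_assoc, pow_succ, mul_comm (((2:ENNReal)^(5*N+1))^j) _]
    have h2r : 2 * r ≤ r + k * (σ / 16) := by
      have : r ≤ k * (σ / 16) := by
        have h1 : r < τ * σ := hrτ
        nlinarith
      linarith
    have hpow : ((2 : ENNReal) ^ (5 * N + 1)) ^ k ≤ (2 : ENNReal) ^ (N + (5 * N + 1) * k) := by
      rw [← ENNReal.rpow_natCast ((2 : ENNReal) ^ (5 * N + 1)) k,
        ← ENNReal.rpow_mul]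
      exact ENNReal.rpow_le_rpow_of_exponent_le one_le_two
        (by nlinarith)
    calc μ (ball x (2 * r)) ≤ μ (ball x (r + k * (σ / 16))) :=
          measure_mono (ball_subset_ball h2r)
      _ ≤ ((2 : ENNReal) ^ (5 * N + 1)) ^ k * μ (ball x r) := key k
      _ ≤ (2 : ENNReal) ^ (N + (5 * N + 1) * k) * μ (ball x r) := mul_le_mul_left hpow _
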